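/- Let T = Trian(A, M, B) be a triangular algebra over R in which A and B have only trivial idempotents, and let σ be an automorphism of T given in standard form with data (f, g, m₀, ν). Then every σ-derivation d of T is of the form d(a, m, b) = (d_A(a), f(a)·m_d − m_d·b − m₀·d_B(b) + ξ(m), d_B(b)) for all (a, m, b) ∈ T, where d_A is an f-derivation of A (d_A(aa') = d_A(a)a' + f(a)d_A(a')), d_B is a g-derivation of B (d_B(bb') = d_B(b)b' + g(b)d_B(b')), m_d is an element of M, and ξ : M → M is an R-linear map satisfying ξ(a·m) = d_A(a)·m + f(a)·ξ(m) and ξ(m·b) = ξ(m)·b + ν(m)·d_B(b) for all a ∈ A, b ∈ B, m ∈ M. -/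

import Mathlib

/-!
Triangular algebras `Trian(A, M, B)` realized on the type `A × M × B`, where `A`, `B` are
unital associative `R`-algebras and `M` is an `(A, B)`-bimodule (a left `A`-module and a
right `B`-module, the right action being encoded as a left `Bᵐᵒᵖ`-action, written
`op b • m`, with the two actions commuting), compatible with the `R`-module structure.
-/

set_option linter.unusedSectionVars false

open MulOpposite

variable {R A B M : Type*} [CommRing R] [Ring A] [Ring B]
  [Algebra R A] [Algebra R B]
  [AddCommGroup M] [Module R M]
  [Module A M] [Module Bᵐᵒᵖ M]
  [SMulCommClass A Bᵐᵒᵖ M]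
  [IsScalarTower R A M] [SMulCommClass R A M]
  [IsScalarTower R Bᵐᵒᵖ M] [SMulCommClass R Bᵐᵒᵖ M]

/-- Multiplication of the triangular algebra `Trian(A, M, B)`:
`(a, m, b) * (a', m', b') = (a * a', a • m' + m • b', b * b')`, where the right action of
`B` on `M` is written `op b • m`. -/
instance triMul : Mul (A × M × B) :=
  ⟨fun x y => (x.1 * y.1, x.1 • y.2.1 + op y.2.2 • x.2.1, x.2.2 * y.2.2)⟩

theorem tri_mul_def (x y : A × M × B) :
    x * y = (x.1 * y.1, x.1 • y.2.1 + op y.2.2 • x.2.1, x.2.2 * y.2.2) := rfl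

instance triOne : One (A × M × B) := ⟨(1, 0, 1)⟩

theorem tri_one_def : (1 : A × M × B) = (1, 0, 1) := rfl

/-- The triangular algebra `Trian(A, M, B)` as a ring structure on `A × M × B`. -/
instance triRing : Ring (A × M × B) where
  __ := (inferInstance : AddCommGroup (A × M × B))
  __ := triMul
  __ := triOne
  left_distrib x y z := by
    refine Prod.ext ?_ (Prod.ext ?_ ?_) <;>
      simp [tri_mul_def, mul_add, smul_add, add_smul, Prod.fst_add, Prod.snd_add] <;> abel
  right_distrib x y z := by
    refine Prod.ext ?_ (Prod.ext ?_ ?_) <;>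
      simp [tri_mul_def, add_mul, smul_add, add_smul, Prod.fst_add, Prod.snd_add] <;> abel
  zero_mul x := by
    refine Prod.ext ?_ (Prod.ext ?_ ?_) <;> simp [tri_mul_def]
  mul_zero x := by
    refine Prod.ext ?_ (Prod.ext ?_ ?_) <;> simp [tri_mul_def]
  mul_assoc x y z := by
    refine Prod.ext (mul_assoc _ _ _) (Prod.ext ?_ (mul_assoc _ _ _))
    show (x.1 * y.1) • z.2.1 + op z.2.2 • (x.1 • y.2.1 + op y.2.2 • x.2.1)
        = x.1 • (y.1 • z.2.1 + op z.2.2 • y.2.1) + op (y.2.2 * z.2.2) • x.2.1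
    rw [mul_smul, smul_add, smul_add, op_mul, mul_smul, smul_comm x.1 (op z.2.2)]
    abel
  one_mul x := by
    refine Prod.ext (one_mul _) (Prod.ext ?_ (one_mul _))
    show (1 : A) • x.2.1 + op x.2.2 • (0 : M) = x.2.1
    simp
  mul_one x := by
    refine Prod.ext (mul_one _) (Prod.ext ?_ (mul_one _))
    show x.1 • (0 : M) + op (1 : B) • x.2.1 = x.2.1
    simp

/-- The triangular algebra `Trian(A, M, B)` as an `R`-algebra. -/
instance triAlgebra : Algebra R (A × M × B) :=
  Algebra.ofModule
    (fun r x y => by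
      refine Prod.ext ?_ (Prod.ext ?_ ?_)
      · exact smul_mul_assoc r x.1 y.1
      · show (r • x.1) • y.2.1 + op y.2.2 • (r • x.2.1) = r • (x.1 • y.2.1 + op y.2.2 • x.2.1)
        rw [smul_assoc, smul_add, smul_comm (op y.2.2) r]
      · exact smul_mul_assoc r x.2.2 y.2.2)
    (fun r x y => by
      refine Prod.ext ?_ (Prod.ext ?_ ?_)
      · exact mul_smul_comm r x.1 y.1
      · show x.1 • (r • y.2.1) + op (r • y.2.2) • x.2.1 = r • (x.1 • y.2.1 + op y.2.2 • x.2.1)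
        rw [op_smul, smul_assoc, smul_add, smul_comm x.1 r]
      · exact mul_smul_comm r x.2.2 y.2.2)

/-- Description of σ-derivations of a triangular algebra whose corner
algebras have only trivial idempotents. -/
theorem sigma_derivation_description
    [Nontrivial M] [FaithfulSMul A M] [FaithfulSMul Bᵐᵒᵖ M]
    (hA : ∀ e : A, e * e = e → e = 0 ∨ e = 1)
    (hB : ∀ e : B, e * e = e → e = 0 ∨ e = 1)
    (f : A ≃ₐ[R] A) (g : B ≃ₐ[R] B) (m₀ : M) (ν : M ≃ₗ[R] M)
    (hν₁ : ∀ (a : A) (m : M), ν (a • m) = f a • ν m)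
    (hν₂ : ∀ (m : M) (b : B), ν (op b • m) = op (g b) • ν m)
    (σ : (A × M × B) ≃ₐ[R] (A × M × B))
    (hσ : ∀ (a : A) (m : M) (b : B),
      σ (a, m, b) = (f a, f a • m₀ - op (g b) • m₀ + ν m, g b))
    (d : (A × M × B) →ₗ[R] (A × M × B))
    (hd : ∀ x y : A × M × B, d (x * y) = d x * y + σ x * d y) :
    ∃ (dA : A →ₗ[R] A) (dB : B →ₗ[R] B) (m_d : M) (ξ : M →ₗ[R] M),
      -- dA is an f-derivation of A
      (∀ a a' : A, dA (a * a') = dA a * a' + f a * dA a') ∧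
      -- dB is a g-derivation of B
      (∀ b b' : B, dB (b * b') = dB b * b' + g b * dB b') ∧
      -- compatibility properties of ξ
      (∀ (a : A) (m : M), ξ (a • m) = dA a • m + f a • ξ m) ∧
      (∀ (m : M) (b : B), ξ (op b • m) = op b • ξ m + op (dB b) • ν m) ∧
      -- the form of d
      (∀ (a : A) (m : M) (b : B),
        d (a, m, b) = (dA a, f a • m_d - op b • m_d - op (dB b) • m₀ + ξ m, dB b)) := by
  -- values of σ on the idempotents
  have hσ1 : σ ((1:A), (0:M), (0:B)) = (1, m₀, 0) := by rw [hσ]; simp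
  have hσq : σ ((0:A), (0:M), (1:B)) = (0, -m₀, 1) := by rw [hσ]; simp
  -- d 1 = 0
  have hd1 : d (1 : A × M × B) = 0 := by
    have h := hd 1 1
    rw [mul_one, map_one σ, one_mul, mul_one] at h
    exact left_eq_add.mp h
  -- d of the idempotent p = (1,0,0)
  have hp : d ((1:A), (0:M), (0:B)) = (0, (d ((1:A), (0:M), (0:B))).2.1, 0) := by
    have e := hd ((1:A), (0:M), (0:B)) ((1:A), (0:M), (0:B))
    rw [show ((1,0,0) : A × M × B) * ((1,0,0) : A × M × B) = (1,0,0) from by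
        refine Prod.ext ?_ (Prod.ext ?_ ?_) <;> simp [tri_mul_def], hσ1] at e
    refine Prod.ext ?_ (Prod.ext rfl ?_)
    · have h := congrArg (fun z : A × M × B => z.1) e
      simp only [tri_mul_def] at h
      simpa using h
    · have h := congrArg (fun z : A × M × B => z.2.2) e
      simp only [tri_mul_def] at h
      simpa using h
  set md : M := (d ((1:A), (0:M), (0:B))).2.1 with hmd
  -- d of q = (0,0,1)
  have hq : d ((0:A), (0:M), (1:B)) = (0, -md, 0) := by
    have hsub : ((0:A), (0:M), (1:B)) = (1 : A × M × B) - ((1:A), (0:M), (0:B)) := by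
      rw [tri_one_def]
      refine Prod.ext ?_ (Prod.ext ?_ ?_) <;> simp
    rw [hsub, map_sub, hd1, hp]
    refine Prod.ext ?_ (Prod.ext ?_ ?_) <;> simp
  -- the linear maps dA, dB, ξ
  let dA : A →ₗ[R] A :=
    { toFun := fun a => (d (a, 0, 0)).1
      map_add' := fun a a' => by
        have h : ((a + a', (0:M), (0:B)) : A × M × B) = (a, 0, 0) + (a', 0, 0) := by
          refine Prod.ext ?_ (Prod.ext ?_ ?_) <;> simp
        show (d (a + a', 0, 0)).1 = (d (a, 0, 0)).1 + (d (a', 0, 0)).1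
        rw [h, map_add]; rfl
      map_smul' := fun r a => by
        have h : ((r • a, (0:M), (0:B)) : A × M × B) = r • ((a, 0, 0) : A × M × B) := by
          refine Prod.ext ?_ (Prod.ext ?_ ?_) <;> simp
        show (d (r • a, 0, 0)).1 = r • (d (a, 0, 0)).1
        rw [h, map_smul]; rfl }
  let dB : B →ₗ[R] B :=
    { toFun := fun b => (d (0, 0, b)).2.2
      map_add' := fun b b' => by
        have h : (((0:A), (0:M), b + b') : A × M × B) = (0, 0, b) + (0, 0, b') := by
          refine Prod.ext ?_ (Prod.ext ?_ ?_) <;> simp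
        show (d (0, 0, b + b')).2.2 = (d (0, 0, b)).2.2 + (d (0, 0, b')).2.2
        rw [h, map_add]; rfl
      map_smul' := fun r b => by
        have h : (((0:A), (0:M), r • b) : A × M × B) = r • (((0:A), (0:M), b) : A × M × B) := by
          refine Prod.ext ?_ (Prod.ext ?_ ?_) <;> simp
        show (d (0, 0, r • b)).2.2 = r • (d (0, 0, b)).2.2
        rw [h, map_smul]; rfl }
  let ξ : M →ₗ[R] M :=
    { toFun := fun m => (d (0, m, 0)).2.1
      map_add' := fun m m' => by
        have h : (((0:A), m + m', (0:B)) : A × M × B) = (0, m, 0) + (0, m', 0) := by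
          refine Prod.ext ?_ (Prod.ext ?_ ?_) <;> simp
        show (d (0, m + m', 0)).2.1 = (d (0, m, 0)).2.1 + (d (0, m', 0)).2.1
        rw [h, map_add]; rfl
      map_smul' := fun r m => by
        have h : (((0:A), r • m, (0:B)) : A × M × B) = r • (((0:A), m, (0:B)) : A × M × B) := by
          refine Prod.ext ?_ (Prod.ext ?_ ?_) <;> simp
        show (d (0, r • m, 0)).2.1 = r • (d (0, m, 0)).2.1
        rw [h, map_smul]; rfl }
  -- description of d on the three corners
  have La : ∀ a : A, d (a, (0:M), (0:B)) = (dA a, f a • md, 0) := by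
    intro a
    have e := hd (a, (0:M), (0:B)) ((1:A), (0:M), (0:B))
    rw [show ((a,0,0) : A × M × B) * ((1,0,0) : A × M × B) = (a,0,0) from by
        refine Prod.ext ?_ (Prod.ext ?_ ?_) <;> simp [tri_mul_def], hp, hσ] at e
    refine Prod.ext rfl (Prod.ext ?_ ?_)
    · have h := congrArg (fun z : A × M × B => z.2.1) e
      simp only [tri_mul_def] at h
      simpa using h
    · have h := congrArg (fun z : A × M × B => z.2.2) e
      simp only [tri_mul_def] at h
      simpa using h
  have Lb : ∀ b : B, d ((0:A), (0:M), b) = (0, -(op b • md) - op (dB b) • m₀, dB b) := by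
    intro b
    have e := hd ((0:A), (0:M), (1:B)) ((0:A), (0:M), b)
    rw [show ((0,0,1) : A × M × B) * ((0,0,b) : A × M × B) = (0,0,b) from by
        refine Prod.ext ?_ (Prod.ext ?_ ?_) <;> simp [tri_mul_def], hq, hσq] at e
    refine Prod.ext ?_ (Prod.ext ?_ rfl)
    · have h := congrArg (fun z : A × M × B => z.1) e
      simp only [tri_mul_def] at h
      simpa using h
    · have h := congrArg (fun z : A × M × B => z.2.1) e
      simp only [tri_mul_def] at h
      simp at h
      show (d (0, 0, b)).2.1 = -(op b • md) - op (dB b) • m₀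
      rw [sub_eq_add_neg]
      exact h
  have Lm : ∀ m : M, d ((0:A), m, (0:B)) = (0, ξ m, 0) := by
    intro m
    have e1 := hd ((0:A), m, (0:B)) ((0:A), (0:M), (1:B))
    rw [show ((0,m,0) : A × M × B) * ((0,0,1) : A × M × B) = (0,m,0) from by
        refine Prod.ext ?_ (Prod.ext ?_ ?_) <;> simp [tri_mul_def], hq, hσ] at e1
    have e2 := hd ((1:A), (0:M), (0:B)) ((0:A), m, (0:B))
    rw [show ((1,0,0) : A × M × B) * ((0,m,0) : A × M × B) = (0,m,0) from by
        refine Prod.ext ?_ (Prod.ext ?_ ?_) <;> simp [tri_mul_def], hp, hσ1] at e2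
    refine Prod.ext ?_ (Prod.ext rfl ?_)
    · have h := congrArg (fun z : A × M × B => z.1) e1
      simp only [tri_mul_def] at h
      simpa using h
    · have h := congrArg (fun z : A × M × B => z.2.2) e2
      simp only [tri_mul_def] at h
      simpa using h
  -- derivation rules
  have PA : ∀ a a' : A, dA (a * a') = dA a * a' + f a * dA a' := by
    intro a a'
    have e := hd (a, (0:M), (0:B)) (a', (0:M), (0:B))
    rw [show ((a,0,0) : A × M × B) * ((a',0,0) : A × M × B) = (a * a',0,0) from by
        refine Prod.ext ?_ (Prod.ext ?_ ?_) <;> simp [tri_mul_def], hσ] at e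
    have h := congrArg (fun z : A × M × B => z.1) e
    simp only [tri_mul_def] at h
    simp at h; exact h
  have PB : ∀ b b' : B, dB (b * b') = dB b * b' + g b * dB b' := by
    intro b b'
    have e := hd ((0:A), (0:M), b) ((0:A), (0:M), b')
    rw [show ((0,0,b) : A × M × B) * ((0,0,b') : A × M × B) = (0,0,b * b') from by
        refine Prod.ext ?_ (Prod.ext ?_ ?_) <;> simp [tri_mul_def], hσ] at e
    have h := congrArg (fun z : A × M × B => z.2.2) e
    simp only [tri_mul_def] at h
    simp at h; exact h
  have Pξ1 : ∀ (a : A) (m : M), ξ (a • m) = dA a • m + f a • ξ m := by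
    intro a m
    have e := hd (a, (0:M), (0:B)) ((0:A), m, (0:B))
    rw [show ((a,0,0) : A × M × B) * ((0,m,0) : A × M × B) = (0, a • m, 0) from by
        refine Prod.ext ?_ (Prod.ext ?_ ?_) <;> simp [tri_mul_def], hσ, Lm m] at e
    have h := congrArg (fun z : A × M × B => z.2.1) e
    simp only [tri_mul_def] at h
    simp at h; exact h
  have Pξ2 : ∀ (m : M) (b : B), ξ (op b • m) = op b • ξ m + op (dB b) • ν m := by
    intro m b
    have e := hd ((0:A), m, (0:B)) ((0:A), (0:M), b)
    rw [show ((0,m,0) : A × M × B) * ((0,0,b) : A × M × B) = (0, op b • m, 0) from by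
        refine Prod.ext ?_ (Prod.ext ?_ ?_) <;> simp [tri_mul_def], hσ, Lm m] at e
    have h := congrArg (fun z : A × M × B => z.2.1) e
    simp only [tri_mul_def] at h
    simp at h; exact h
  refine ⟨dA, dB, md, ξ, PA, PB, Pξ1, Pξ2, fun a m b => ?_⟩
  have hsplit : ((a, m, b) : A × M × B) = (a, 0, 0) + (0, m, 0) + (0, 0, b) := by
    refine Prod.ext ?_ (Prod.ext ?_ ?_) <;> simp
  rw [hsplit, map_add, map_add, La a, Lm m, Lb b]
  refine Prod.ext ?_ (Prod.ext ?_ ?_)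
  · simp
  · show f a • md + ξ m + (-(op b • md) - op (dB b) • m₀)
      = f a • md - op b • md - op (dB b) • m₀ + ξ m
    abel
  · simp
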